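/- Let b̃ = b + σq where q is uniformly distributed on the unit sphere in ℝᵈ with d > 2 and σ > 0, and let v₁ be a fixed unit vector. Then P(|v₁ᵀb̃| ≤ √π σδ/√(2d)) ≤ δ for any δ ∈ (0,1). -/

import Mathlib

open scoped RealInnerProductSpace
open MeasureTheory

/-- The uniform probability measure on the unit sphere of `EuclideanSpace ℝ (Fin d)`,
obtained by normalizing the surface measure induced by Lebesgue measure. -/
noncomputable def uniformSphere (d : ℕ) :
    Measure (Metric.sphere (0 : EuclideanSpace ℝ (Fin d)) 1) :=
  ((volume : Measure (EuclideanSpace ℝ (Fin d))).toSphere Set.univ)⁻¹ •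
    (volume : Measure (EuclideanSpace ℝ (Fin d))).toSphere

set_option maxHeartbeats 1600000

open Set
open scoped ENNReal Pointwise

lemma gammaCS (x : ℝ) (hx : 0 < x) :
    Real.Gamma (x + 1/2) ≤ Real.Gamma x * Real.sqrt x := by
  have hΓa : 0 < Real.Gamma x := Real.Gamma_pos_of_pos hx
  have hΓb : 0 < Real.Gamma (x+1) := Real.Gamma_pos_of_pos (by linarith)
  have key := Real.convexOn_log_Gamma.2 (Set.mem_Ioi.2 hx)
    (Set.mem_Ioi.2 (by linarith : (0:ℝ) < x + 1))
    (by norm_num : (0:ℝ) ≤ 1/2) (by norm_num : (0:ℝ) ≤ 1/2) (by norm_num)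
  simp only [smul_eq_mul, Function.comp_apply] at key
  rw [show (1/2 : ℝ) * x + 1/2 * (x+1) = x + 1/2 by ring] at key
  have hΓm : 0 < Real.Gamma (x + 1/2) := Real.Gamma_pos_of_pos (by linarith)
  have hsq : Real.Gamma (x + 1/2) ^ 2 ≤ Real.Gamma x * Real.Gamma (x+1) := by
    have h2 : 2 * Real.log (Real.Gamma (x + 1/2)) ≤
        Real.log (Real.Gamma x * Real.Gamma (x+1)) := by
      rw [Real.log_mul hΓa.ne' hΓb.ne']; linarith
    have := Real.exp_le_exp.2 h2
    rwa [Real.exp_log (by positivity), show 2 * Real.log (Real.Gamma (x+1/2))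
      = Real.log (Real.Gamma (x+1/2)) + Real.log (Real.Gamma (x+1/2)) by ring,
      Real.exp_add, Real.exp_log hΓm, ← sq] at this
  calc Real.Gamma (x + 1/2) = Real.sqrt (Real.Gamma (x + 1/2) ^ 2) :=
        (Real.sqrt_sq hΓm.le).symm
    _ ≤ Real.sqrt (Real.Gamma x * Real.Gamma (x+1)) := Real.sqrt_le_sqrt hsq
    _ = Real.Gamma x * Real.sqrt x := by
        rw [Real.Gamma_add_one hx.ne', show Real.Gamma x * (x * Real.Gamma x)
          = Real.Gamma x ^ 2 * x by ring, Real.sqrt_mul (sq_nonneg _),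
          Real.sqrt_sq hΓa.le]

-- final arithmetic: d = m+1, m ≥ 2.
lemma finalArith (m : ℕ) (hm : 2 ≤ m) (δ : ℝ) (hδ0 : 0 < δ) :
    (2 * Real.sqrt Real.pi * δ / Real.sqrt (2 * (m+1))) * ((m : ℝ)/(m+1))
      * (Real.sqrt Real.pi ^ m / Real.Gamma (m/2+1))
    ≤ δ * (Real.sqrt Real.pi ^ (m+1) / Real.Gamma ((m+1)/2+1)) := by
  set d : ℝ := (m : ℝ) + 1 with hdd
  have hd3 : (3:ℝ) ≤ d := by
    have : (2:ℝ) ≤ (m:ℝ) := by exact_mod_cast hm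
    simp [hdd]; linarith
  have hd0 : (0:ℝ) < d := by linarith
  have hπ : 0 < Real.sqrt Real.pi := Real.sqrt_pos.2 Real.pi_pos
  have hΓ1 : 0 < Real.Gamma ((m:ℝ)/2+1) := Real.Gamma_pos_of_pos (by positivity)
  have hΓ2 : 0 < Real.Gamma (((m:ℝ)+1)/2+1) := Real.Gamma_pos_of_pos (by positivity)
  -- key gamma bound : Γ(d/2+1) ≤ Γ((d+1)/2) * √((d+1)/2)
  have hkey : Real.Gamma (d/2 + 1) ≤ Real.Gamma ((d+1)/2) * Real.sqrt ((d+1)/2) := by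
    have := gammaCS ((d+1)/2) (by linarith)
    rwa [show (d+1)/2 + 1/2 = d/2 + 1 by ring] at this
  -- note (m)/2 + 1 = (d+1)/2 and (m+1)/2+1 = d/2+1
  have e1 : (m:ℝ)/2 + 1 = (d+1)/2 := by rw [hdd]; ring
  have e2 : ((m:ℝ)+1)/2 + 1 = d/2 + 1 := by rw [hdd]
  rw [e1, e2]
  have hs2d : 0 < Real.sqrt (2*d) := Real.sqrt_pos.2 (by linarith)
  -- numeric: √((d+1)/2) * 2 * (d-1) ≤ d * √(2d)
  have hnum : Real.sqrt ((d+1)/2) * (2 * (d-1)) ≤ d * Real.sqrt (2*d) := by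
    have h1 : Real.sqrt ((d+1)/2) * (2 * (d-1)) = Real.sqrt ((d+1)/2 * (2*(d-1))^2) := by
      rw [Real.sqrt_mul (by nlinarith : (0:ℝ) ≤ (d+1)/2), Real.sqrt_sq (by nlinarith)]
    have h2 : d * Real.sqrt (2*d) = Real.sqrt (d^2 * (2*d)) := by
      rw [Real.sqrt_mul (sq_nonneg d), Real.sqrt_sq hd0.le]
    rw [h1, h2]
    apply Real.sqrt_le_sqrt
    nlinarith
  -- now conclude
  have hΓa : 0 < Real.Gamma ((d+1)/2) := by rw [← e1]; exact hΓ1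
  have hΓm : 0 < Real.Gamma (d/2+1) := by rw [← e2]; exact hΓ2
  have hm0 : (m:ℝ) = d - 1 := by rw [hdd]; ring
  have hπp : 0 < Real.sqrt Real.pi ^ m := pow_pos hπ m
  have hΓa : 0 < Real.Gamma ((d+1)/2) := by rw [← e1]; exact hΓ1
  have hΓm : 0 < Real.Gamma (d/2+1) := by rw [← e2]; exact hΓ2
  have key2 : Real.Gamma (d/2+1) * (2*(d-1)) ≤ Real.Gamma ((d+1)/2) * (d * Real.sqrt (2*d)) := by
    calc Real.Gamma (d/2+1) * (2*(d-1)) ≤ (Real.Gamma ((d+1)/2) * Real.sqrt ((d+1)/2)) * (2*(d-1)) := by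
          apply mul_le_mul_of_nonneg_right hkey (by nlinarith)
      _ = Real.Gamma ((d+1)/2) * (Real.sqrt ((d+1)/2) * (2*(d-1))) := by ring
      _ ≤ Real.Gamma ((d+1)/2) * (d * Real.sqrt (2*d)) := by
          exact mul_le_mul_of_nonneg_left hnum hΓa.le
  rw [div_mul_div_comm, div_mul_div_comm, mul_div_assoc']
  rw [div_le_div_iff₀ (by positivity) (by positivity)]
  have hm0 : (m:ℝ) = d - 1 := by rw [hdd]; ring
  have expand : Real.sqrt Real.pi ^ (m+1) = Real.sqrt Real.pi ^ m * Real.sqrt Real.pi := by ring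
  rw [hm0, expand]
  nlinarith [mul_le_mul_of_nonneg_left key2
    (le_of_lt (mul_pos hπp (mul_pos hδ0 hπ)))]


noncomputable def Gfun (s : ℝ) : ℝ := s / Real.sqrt (1 - s^2)
noncomputable def Wfun (s : ℝ) : ℝ := 1 / ((1 - s^2) * Real.sqrt (1 - s^2))

lemma Gderiv {s : ℝ} (hs : s^2 < 1) : HasDerivAt Gfun (Wfun s) s := by
  have h1 : 0 < 1 - s^2 := by linarith
  have hsqrt : 0 < Real.sqrt (1 - s^2) := Real.sqrt_pos.2 h1
  have hinner : HasDerivAt (fun x : ℝ => 1 - x^2) (-(2*s)) s := by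
    simpa using ((hasDerivAt_pow 2 s).const_sub 1)
  have hs2 : HasDerivAt (fun x : ℝ => Real.sqrt (1 - x^2))
      (-(2*s) / (2 * Real.sqrt (1 - s^2))) s := hinner.sqrt h1.ne'
  have : HasDerivAt (fun x => id x / Real.sqrt (1 - x^2)) _ s := (hasDerivAt_id s).div hs2 hsqrt.ne'
  convert this using 1
  · rfl
  rw [Wfun]
  rw [Real.sq_sqrt h1.le]
  simp only [id]
  field_simp
  have hq : Real.sqrt (1-s^2) * Real.sqrt (1-s^2) = 1 - s^2 := Real.mul_self_sqrt h1.le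
  linear_combination (-1) * hq

lemma Gmono {u v : ℝ} (hu : -1 < u) (huv : u ≤ v) (hv : v < 1) : Gfun u ≤ Gfun v := by
  have hu2 : 0 < 1 - u^2 := by nlinarith
  have hv2 : 0 < 1 - v^2 := by nlinarith
  have hsu : 0 < Real.sqrt (1 - u^2) := Real.sqrt_pos.2 hu2
  have hsv : 0 < Real.sqrt (1 - v^2) := Real.sqrt_pos.2 hv2
  rw [Gfun, Gfun, div_le_div_iff₀ hsu hsv]
  rcases le_or_gt u 0 with hu0 | hu0
  · rcases le_or_gt 0 v with hv0 | hv0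
    · exact le_trans (mul_nonpos_of_nonpos_of_nonneg hu0 hsv.le)
        (mul_nonneg hv0 hsu.le)
    · -- u ≤ v < 0
      have h1 : (-v) * Real.sqrt (1 - u^2) ≤ (-u) * Real.sqrt (1 - v^2) := by
        have e1 : (-v) * Real.sqrt (1 - u^2) = Real.sqrt (v^2 * (1 - u^2)) := by
          rw [Real.sqrt_mul (by positivity), Real.sqrt_sq_eq_abs, abs_of_neg hv0]
        have e2 : (-u) * Real.sqrt (1 - v^2) = Real.sqrt (u^2 * (1 - v^2)) := by
          rw [Real.sqrt_mul (by positivity), Real.sqrt_sq_eq_abs,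
            abs_of_neg (lt_of_le_of_lt huv hv0)]
        rw [e1, e2]
        apply Real.sqrt_le_sqrt
        nlinarith
      linarith
  · -- 0 < u ≤ v
    have e1 : u * Real.sqrt (1 - v^2) = Real.sqrt (u^2 * (1 - v^2)) := by
      rw [Real.sqrt_mul (by positivity), Real.sqrt_sq_eq_abs, abs_of_pos hu0]
    have e2 : v * Real.sqrt (1 - u^2) = Real.sqrt (v^2 * (1 - u^2)) := by
      rw [Real.sqrt_mul (by positivity), Real.sqrt_sq_eq_abs,
        abs_of_pos (lt_of_lt_of_le hu0 huv)]
    rw [e1, e2]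
    apply Real.sqrt_le_sqrt
    nlinarith

lemma sliceBound (ρ a b : ℝ) (hρ : 0 < ρ) :
    volume {t : ℝ | Real.sqrt (t^2 + ρ^2) ≤ 1 ∧ a * Real.sqrt (t^2+ρ^2) ≤ t
      ∧ t ≤ b * Real.sqrt (t^2+ρ^2)}
    ≤ ∫⁻ s in Set.Ioc a b ∩ {s : ℝ | s^2 + ρ^2 ≤ 1},
        ENNReal.ofReal (ρ * Wfun s) := by
  rcases lt_or_ge 1 ρ with hρ1 | hρ1
  · -- set is empty
    have : {t : ℝ | Real.sqrt (t^2 + ρ^2) ≤ 1 ∧ a * Real.sqrt (t^2+ρ^2) ≤ t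
        ∧ t ≤ b * Real.sqrt (t^2+ρ^2)} = ∅ := by
      ext t
      simp only [Set.mem_setOf_eq, Set.mem_empty_iff_false, iff_false, not_and]
      intro h1
      exfalso
      have h2 : ρ ≤ Real.sqrt (t^2+ρ^2) := by
        have := Real.sqrt_le_sqrt (show ρ^2 ≤ t^2 + ρ^2 by nlinarith)
        rwa [Real.sqrt_sq hρ.le] at this
      linarith
    rw [this]
    simp
  · set T := Real.sqrt (1 - ρ^2) with hT
    have hT2 : T^2 = 1 - ρ^2 := Real.sq_sqrt (by nlinarith)
    have hT0 : 0 ≤ T := Real.sqrt_nonneg _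
    have hT1 : T < 1 := by
      nlinarith [hT2, sq_nonneg T]
    set a'' := max a (-T) with ha''
    set b'' := min b T with hb''
    have ha''T : -T ≤ a'' := le_max_right _ _
    have hb''T : b'' ≤ T := min_le_right _ _
    have ha''1 : -1 < a'' := by nlinarith [ha''T]
    have hb''1 : b'' < 1 := lt_of_le_of_lt hb''T hT1
    -- step 1 : containment
    have hpt : ∀ t ∈ {t : ℝ | Real.sqrt (t^2 + ρ^2) ≤ 1 ∧ a * Real.sqrt (t^2+ρ^2) ≤ t
        ∧ t ≤ b * Real.sqrt (t^2+ρ^2)},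
        ∃ s₀, a'' ≤ s₀ ∧ s₀ ≤ b'' ∧ -T ≤ s₀ ∧ s₀ ≤ T ∧ t = ρ * Gfun s₀ := by
      rintro t ⟨h1, h2, h3⟩
      set R := Real.sqrt (t^2 + ρ^2) with hR
      have hR2 : R^2 = t^2 + ρ^2 := Real.sq_sqrt (by positivity)
      have hRρ : ρ ≤ R := by
        have := Real.sqrt_le_sqrt (show ρ^2 ≤ t^2 + ρ^2 by nlinarith)
        rwa [Real.sqrt_sq hρ.le] at this
      have hR0 : 0 < R := lt_of_lt_of_le hρ hRρ
      set s₀ := t / R with hs₀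
      have hs₀a : a ≤ s₀ := (le_div_iff₀ hR0).2 (by linarith [h2])
      have hs₀b : s₀ ≤ b := (div_le_iff₀ hR0).2 (by linarith [h3])
      have hR1sq : R^2 ≤ 1 := by nlinarith
      have hs₀sq : s₀^2 ≤ T^2 := by
        rw [hT2, hs₀, div_pow]
        rw [div_le_iff₀ (by positivity)]
        nlinarith [mul_le_mul_of_nonneg_left hR1sq (sq_nonneg ρ)]
      have habs : |s₀| ≤ T := by
        rw [← Real.sqrt_sq_eq_abs]
        calc Real.sqrt (s₀^2) ≤ Real.sqrt (T^2) := Real.sqrt_le_sqrt hs₀sq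
          _ = T := Real.sqrt_sq hT0
      have hs₀T : -T ≤ s₀ ∧ s₀ ≤ T := abs_le.1 habs
      have hs₀a'' : a'' ≤ s₀ := max_le hs₀a hs₀T.1
      have hs₀b'' : s₀ ≤ b'' := le_min hs₀b hs₀T.2
      have ht : t = ρ * Gfun s₀ := by
        have h1s : 1 - s₀^2 = ρ^2 / R^2 := by
          rw [hs₀, div_pow]
          field_simp
          linarith [hR2]
        rw [Gfun, h1s]
        rw [show Real.sqrt (ρ^2 / R^2) = ρ / R by
          rw [Real.sqrt_div (sq_nonneg ρ), Real.sqrt_sq hρ.le, Real.sqrt_sq hR0.le]]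
        field_simp
        rw [hs₀]
        field_simp
      exact ⟨s₀, hs₀a'', hs₀b'', hs₀T.1, hs₀T.2, ht⟩
    rcases lt_or_ge b'' a'' with hba | hab
    · -- the set is empty
      have hempty : {t : ℝ | Real.sqrt (t^2 + ρ^2) ≤ 1 ∧ a * Real.sqrt (t^2+ρ^2) ≤ t
          ∧ t ≤ b * Real.sqrt (t^2+ρ^2)} = ∅ := by
        rw [Set.eq_empty_iff_forall_notMem]
        intro t ht
        obtain ⟨s₀, h5, h6, _, _, _⟩ := hpt t ht
        linarith
      rw [hempty]
      simp
    · have ha''T' : -T ≤ a'' := ha''T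
      have hb''T' : b'' ≤ T := hb''T
      have ha''1' : -1 < a'' := ha''1
      have hb''1' : b'' < 1 := hb''1
      have ha''lt1 : a'' < 1 := lt_of_le_of_lt hab hb''1
      have hb''gt : -1 < b'' := lt_of_lt_of_le ha''1 hab
      have hsub : {t : ℝ | Real.sqrt (t^2 + ρ^2) ≤ 1 ∧ a * Real.sqrt (t^2+ρ^2) ≤ t
          ∧ t ≤ b * Real.sqrt (t^2+ρ^2)} ⊆ Set.Icc (ρ * Gfun a'') (ρ * Gfun b'') := by
        intro t ht
        obtain ⟨s₀, h5, h6, h7, h8, h9⟩ := hpt t ht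
        have hs1 : -1 < s₀ := by linarith
        have hs2 : s₀ < 1 := by linarith
        constructor
        · rw [h9]
          exact mul_le_mul_of_nonneg_left (Gmono ha''1 h5 hs2) hρ.le
        · rw [h9]
          exact mul_le_mul_of_nonneg_left (Gmono hs1 h6 hb''1) hρ.le
      refine le_trans (measure_mono hsub) ?_
      rw [Real.volume_Icc]
      -- FTC
      have hcont : ContinuousOn Wfun (Set.Icc a'' b'') := by
        apply ContinuousOn.div continuousOn_const
        · exact (continuousOn_const.sub (continuousOn_pow 2)).mul
            ((continuousOn_const.sub (continuousOn_pow 2)).sqrt)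
        · intro s hs
          have h1 : s^2 < 1 := by
            rcases hs with ⟨hs1, hs2⟩
            nlinarith [sq_nonneg (s - T), sq_nonneg (s + T)]
          have : 0 < 1 - s^2 := by linarith
          positivity
      have hftc : ∫ s in a''..b'', Wfun s = Gfun b'' - Gfun a'' := by
        apply intervalIntegral.integral_eq_sub_of_hasDerivAt
        · intro s hs
          rw [Set.uIcc_of_le hab] at hs
          apply Gderiv
          rcases hs with ⟨hs1, hs2⟩
          nlinarith [sq_nonneg (s - T), sq_nonneg (s + T)]
        · exact (hcont.mono (by rw [Set.uIcc_of_le hab])).intervalIntegrable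
      have hIcc : Set.Ioc a'' b'' ⊆ Set.Ioc a b ∩ {s : ℝ | s^2 + ρ^2 ≤ 1} := by
        rintro s ⟨hs1, hs2⟩
        refine ⟨⟨lt_of_le_of_lt (le_max_left _ _) hs1, le_trans hs2 (min_le_left _ _)⟩, ?_⟩
        have h1 : -T < s := lt_of_le_of_lt ha''T hs1
        have h2 : s ≤ T := le_trans hs2 hb''T
        simp only [Set.mem_setOf_eq]
        nlinarith [hT2]
      refine le_trans ?_ (lintegral_mono_set hIcc)
      rw [← ofReal_integral_eq_lintegral_ofReal]
      · rw [← intervalIntegral.integral_of_le hab]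
        have heq2 : ∫ s in a''..b'', ρ * Wfun s = ρ * (Gfun b'' - Gfun a'') := by
          rw [intervalIntegral.integral_const_mul, hftc]
        rw [heq2]
        apply ENNReal.ofReal_le_ofReal
        ring_nf
        exact le_refl _
      · exact ((continuousOn_const.mul hcont).integrableOn_compact isCompact_Icc).mono_set
          Set.Ioc_subset_Icc_self
      · filter_upwards [ae_restrict_mem measurableSet_Ioc] with s hs
        have h1 : s^2 < 1 := by
          have h2 : -T < s := lt_of_le_of_lt ha''T hs.1
          have h3 : s ≤ T := le_trans hs.2 hb''T
          nlinarith [sq_nonneg (s - T), sq_nonneg (s + T)]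
        have : 0 < 1 - s^2 := by linarith
        rw [Wfun]
        positivity


lemma ballNormIntegral (m : ℕ) (hm : 2 ≤ m) (R : ℝ) (hR : 0 ≤ R) :
    ∫⁻ y : EuclideanSpace ℝ (Fin m),
      (Metric.closedBall (0 : EuclideanSpace ℝ (Fin m)) R).indicator
        (fun y => ENNReal.ofReal ‖y‖) y
    = ENNReal.ofReal ((m : ℝ) * (Real.sqrt Real.pi ^ m / Real.Gamma (m/2+1))
        * (R^(m+1) / (m+1))) := by
  haveI : Nonempty (Fin m) := ⟨⟨0, by omega⟩⟩
  haveI : Nontrivial (EuclideanSpace ℝ (Fin m)) := by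
    apply Module.nontrivial_of_finrank_pos (R := ℝ)
    rw [finrank_euclideanSpace_fin]; omega
  have hind : ∀ y : EuclideanSpace ℝ (Fin m),
      (Metric.closedBall (0 : EuclideanSpace ℝ (Fin m)) R).indicator
        (fun y => ENNReal.ofReal ‖y‖) y
      = ENNReal.ofReal ((fun r : ℝ => if r ≤ R then r else 0) ‖y‖) := by
    intro y
    by_cases h : ‖y‖ ≤ R
    · rw [Set.indicator_of_mem (by simpa [Metric.mem_closedBall] using h)]
      simp [h]
    · rw [Set.indicator_of_notMem (by simpa [Metric.mem_closedBall] using h)]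
      simp [h]
  simp_rw [hind]
  have heq : (fun y : EuclideanSpace ℝ (Fin m) => (fun r : ℝ => if r ≤ R then r else 0) ‖y‖)
      = (Metric.closedBall (0 : EuclideanSpace ℝ (Fin m)) R).indicator (fun y => ‖y‖) := by
    funext y
    by_cases h : ‖y‖ ≤ R
    · rw [Set.indicator_of_mem (by simpa [Metric.mem_closedBall] using h)]; simp [h]
    · rw [Set.indicator_of_notMem (by simpa [Metric.mem_closedBall] using h)]; simp [h]
  have hInt : Integrable (fun y : EuclideanSpace ℝ (Fin m) =>
      (fun r : ℝ => if r ≤ R then r else 0) ‖y‖) := by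
    rw [heq]
    exact (continuous_norm.continuousOn.integrableOn_compact
      (isCompact_closedBall 0 R)).integrable_indicator measurableSet_closedBall
  rw [← ofReal_integral_eq_lintegral_ofReal hInt]
  swap
  · filter_upwards with y
    by_cases h : ‖y‖ ≤ R
    · simp only [h, if_true]; exact norm_nonneg y
    · simp [h]
  congr 1
  rw [integral_fun_norm_addHaar volume (fun r : ℝ => if r ≤ R then r else 0)]
  rw [finrank_euclideanSpace_fin, measureReal_def, EuclideanSpace.volume_ball]
  have hIoi : ∫ r in Set.Ioi (0:ℝ), r ^ (m-1) • (if r ≤ R then r else 0)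
      = R^(m+1)/(m+1) := by
    have h1 : ∀ r : ℝ, r ^ (m-1) • (if r ≤ R then r else 0)
        = (Set.Iic R).indicator (fun r => r^(m-1) * r) r := by
      intro r
      by_cases h : r ≤ R
      · rw [Set.indicator_of_mem (by simpa using h)]; simp [h]
      · rw [Set.indicator_of_notMem (by simpa using h)]; simp [h]
    simp_rw [h1]
    rw [setIntegral_indicator measurableSet_Iic]
    have hset : Set.Ioi (0:ℝ) ∩ Set.Iic R = Set.Ioc 0 R := by
      ext r; simp [Set.mem_Ioc, and_comm]
    rw [hset]
    have h2 : ∀ r ∈ Set.Ioc (0:ℝ) R, r^(m-1) * r = r ^ m := by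
      intro r _
      rw [← pow_succ]; congr 1; omega
    rw [setIntegral_congr_fun measurableSet_Ioc h2, ← intervalIntegral.integral_of_le hR,
      integral_pow]
    simp
  rw [hIoi]
  simp only [nsmul_eq_mul, smul_eq_mul, Fintype.card_fin]
  rw [ENNReal.toReal_mul, ← ENNReal.ofReal_pow (by norm_num), ENNReal.toReal_ofReal (by positivity),
    ENNReal.toReal_ofReal (by positivity)]
  push_cast
  ring


lemma WfunMeasurable : Measurable Wfun := by
  apply Measurable.div measurable_const
  exact ((measurable_const.sub (measurable_id.pow_const 2)).mul
    ((measurable_const.sub (measurable_id.pow_const 2)).sqrt))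

lemma coneBound (m : ℕ) (hm : 2 ≤ m) (a b : ℝ) (ha : -1 ≤ a) (hb : b ≤ 1) :
    volume {p : EuclideanSpace ℝ (Fin m) × ℝ |
        Real.sqrt (p.2^2 + ‖p.1‖^2) ≤ 1
        ∧ a * Real.sqrt (p.2^2 + ‖p.1‖^2) ≤ p.2
        ∧ p.2 ≤ b * Real.sqrt (p.2^2 + ‖p.1‖^2)}
    ≤ ENNReal.ofReal (b - a) *
        ENNReal.ofReal ((m : ℝ) * (Real.sqrt Real.pi ^ m / Real.Gamma (m/2+1)) / (m+1)) := by
  haveI : Nonempty (Fin m) := ⟨⟨0, by omega⟩⟩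
  haveI : Nontrivial (EuclideanSpace ℝ (Fin m)) := by
    apply Module.nontrivial_of_finrank_pos (R := ℝ)
    rw [finrank_euclideanSpace_fin]; omega
  set C : ℝ := (m : ℝ) * (Real.sqrt Real.pi ^ m / Real.Gamma (m/2+1)) / (m+1) with hC
  have hC0 : 0 ≤ C := by
    rw [hC]
    have := Real.Gamma_pos_of_pos (show (0:ℝ) < m/2+1 by positivity)
    positivity
  set K : Set (EuclideanSpace ℝ (Fin m) × ℝ) := {p |
      Real.sqrt (p.2^2 + ‖p.1‖^2) ≤ 1
      ∧ a * Real.sqrt (p.2^2 + ‖p.1‖^2) ≤ p.2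
      ∧ p.2 ≤ b * Real.sqrt (p.2^2 + ‖p.1‖^2)} with hK
  have hcontR : Continuous (fun p : EuclideanSpace ℝ (Fin m) × ℝ =>
      Real.sqrt (p.2^2 + ‖p.1‖^2)) :=
    Real.continuous_sqrt.comp ((continuous_snd.pow 2).add ((continuous_norm.comp continuous_fst).pow 2))
  have hKmeas : MeasurableSet K := by
    rw [hK]
    apply MeasurableSet.inter
    · exact isClosed_le hcontR continuous_const |>.measurableSet
    apply MeasurableSet.inter
    · exact isClosed_le (continuous_const.mul hcontR) continuous_snd |>.measurableSet
    · exact isClosed_le continuous_snd (continuous_const.mul hcontR) |>.measurableSet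
  -- joint function
  set V : Set (EuclideanSpace ℝ (Fin m) × ℝ) :=
    {p | p.2 ∈ Set.Ioc a b ∧ p.2^2 + ‖p.1‖^2 ≤ 1} with hV
  have hVmeas : MeasurableSet V := by
    apply MeasurableSet.inter
    · exact measurable_snd measurableSet_Ioc
    · exact isClosed_le ((continuous_snd.pow 2).add
        ((continuous_norm.comp continuous_fst).pow 2)) continuous_const |>.measurableSet
  set F : EuclideanSpace ℝ (Fin m) × ℝ → ENNReal :=
    V.indicator (fun p => ENNReal.ofReal (‖p.1‖ * Wfun p.2)) with hF
  have hFmeas : Measurable F := by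
    apply Measurable.indicator _ hVmeas
    exact ENNReal.measurable_ofReal.comp
      ((measurable_norm.comp measurable_fst).mul (WfunMeasurable.comp measurable_snd))
  have step1 : volume K ≤ ∫⁻ y : EuclideanSpace ℝ (Fin m), ∫⁻ s : ℝ, F (y, s) := by
    rw [MeasureTheory.Measure.volume_eq_prod, Measure.prod_apply hKmeas]
    apply lintegral_mono_ae
    filter_upwards [compl_mem_ae_iff.2 (measure_singleton (0 : EuclideanSpace ℝ (Fin m)))]
      with y hy
    have hρ : 0 < ‖y‖ := by
      simp only [Set.mem_compl_iff, Set.mem_singleton_iff] at hy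
      exact norm_pos_iff.2 hy
    have hsl : Prod.mk y ⁻¹' K = {t : ℝ | Real.sqrt (t^2 + ‖y‖^2) ≤ 1
        ∧ a * Real.sqrt (t^2+‖y‖^2) ≤ t ∧ t ≤ b * Real.sqrt (t^2+‖y‖^2)} := by
      ext t; simp [hK, Set.mem_setOf_eq]
    rw [hsl]
    refine le_trans (sliceBound ‖y‖ a b hρ) ?_
    have : ∀ s : ℝ, F (y, s) = (Set.Ioc a b ∩ {s : ℝ | s^2 + ‖y‖^2 ≤ 1}).indicator
        (fun s => ENNReal.ofReal (‖y‖ * Wfun s)) s := by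
      intro s
      rw [hF]
      by_cases h : s ∈ Set.Ioc a b ∩ {s : ℝ | s^2 + ‖y‖^2 ≤ 1}
      · rw [Set.indicator_of_mem h, Set.indicator_of_mem]
        exact ⟨h.1, h.2⟩
      · rw [Set.indicator_of_notMem h, Set.indicator_of_notMem]
        intro hmem
        exact h ⟨hmem.1, hmem.2⟩
    simp_rw [this]
    rw [lintegral_indicator]
    exact (measurableSet_Ioc.inter (isClosed_le ((continuous_id.pow 2).add
      continuous_const) continuous_const).measurableSet)
  have step2 : ∫⁻ y : EuclideanSpace ℝ (Fin m), ∫⁻ s : ℝ, F (y, s)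
      = ∫⁻ s : ℝ, ∫⁻ y : EuclideanSpace ℝ (Fin m), F (y, s) := by
    exact lintegral_lintegral_swap hFmeas.aemeasurable
  have step3 : ∀ s : ℝ, ∫⁻ y : EuclideanSpace ℝ (Fin m), F (y, s)
      ≤ (Set.Ioc a b).indicator (fun _ => ENNReal.ofReal C) s := by
    intro s
    by_cases hs : s ∈ Set.Ioc a b
    · rw [Set.indicator_of_mem hs]
      have hs1 : -1 < s := lt_of_le_of_lt ha hs.1
      have hs2 : s ≤ 1 := le_trans hs.2 hb
      have h1s : 0 ≤ 1 - s^2 := by nlinarith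
      set R := Real.sqrt (1 - s^2) with hR
      have hR2 : R^2 = 1 - s^2 := Real.sq_sqrt h1s
      have hR0 : 0 ≤ R := Real.sqrt_nonneg _
      have hR1 : R ≤ 1 := by nlinarith [hR2, sq_nonneg s]
      have hW0 : 0 ≤ Wfun s := by
        rw [Wfun]
        positivity
      have hFy : ∀ y : EuclideanSpace ℝ (Fin m), F (y, s)
          = ENNReal.ofReal (Wfun s) * (Metric.closedBall (0 : EuclideanSpace ℝ (Fin m)) R).indicator
            (fun y => ENNReal.ofReal ‖y‖) y := by
        intro y
        have hmem : (y, s) ∈ V ↔ y ∈ Metric.closedBall (0 : EuclideanSpace ℝ (Fin m)) R := by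
          simp only [hV, Set.mem_setOf_eq, Metric.mem_closedBall, dist_zero_right]
          constructor
          · rintro ⟨_, h2⟩
            rw [hR]
            rw [show s^2 + ‖y‖^2 ≤ 1 ↔ ‖y‖^2 ≤ 1 - s^2 by constructor <;> intro <;> linarith] at h2
            calc ‖y‖ = Real.sqrt (‖y‖^2) := (Real.sqrt_sq (norm_nonneg y)).symm
              _ ≤ Real.sqrt (1 - s^2) := Real.sqrt_le_sqrt h2
          · intro h
            refine ⟨hs, ?_⟩
            have := pow_le_pow_left₀ (norm_nonneg y) h 2
            nlinarith [hR2]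
        rw [hF]
        by_cases h : (y, s) ∈ V
        · rw [Set.indicator_of_mem h, Set.indicator_of_mem (hmem.1 h),
            ← ENNReal.ofReal_mul hW0, mul_comm ‖y‖]
        · rw [Set.indicator_of_notMem h, Set.indicator_of_notMem (fun hc => h (hmem.2 hc)),
            mul_zero]
      simp_rw [hFy]
      rw [lintegral_const_mul _ ((measurable_norm.ennreal_ofReal).indicator
        measurableSet_closedBall)]
      rw [ballNormIntegral m hm R hR0, ← ENNReal.ofReal_mul hW0]
      apply ENNReal.ofReal_le_ofReal
      have hΓ : 0 < Real.Gamma ((m:ℝ)/2+1) := Real.Gamma_pos_of_pos (by positivity)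
      have hkey : Wfun s * R^(m+1) ≤ 1 := by
        rcases eq_or_lt_of_le hR0 with hR0' | hR0'
        · rw [Wfun, ← hR0', ← hR2]
          norm_num
        · have hRc : (1-s^2) * Real.sqrt (1-s^2) = R^3 := by
            rw [← hR, ← hR2]; ring
          rw [Wfun, hRc]
          rw [div_mul_eq_mul_div, one_mul, div_le_one (by positivity)]
          calc R^(m+1) = R^(m-2) * R^3 := by
                rw [← pow_add]; congr 1; omega
            _ ≤ 1 * R^3 := by
                apply mul_le_mul_of_nonneg_right _ (by positivity)
                exact pow_le_one₀ hR0 hR1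
            _ = R^3 := one_mul _
      calc Wfun s * ((m : ℝ) * (Real.sqrt Real.pi ^ m / Real.Gamma (m/2+1)) * (R^(m+1)/(m+1)))
          = (Wfun s * R^(m+1)) * ((m : ℝ) * (Real.sqrt Real.pi ^ m / Real.Gamma (m/2+1)) / (m+1)) := by
            ring
        _ ≤ 1 * ((m : ℝ) * (Real.sqrt Real.pi ^ m / Real.Gamma (m/2+1)) / (m+1)) := by
            apply mul_le_mul_of_nonneg_right hkey
            positivity
        _ = C := by rw [one_mul]
    · have : ∀ y : EuclideanSpace ℝ (Fin m), F (y, s) = 0 := by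
        intro y
        rw [hF, Set.indicator_of_notMem]
        intro hc
        exact hs hc.1
      simp_rw [this]
      rw [lintegral_zero, Set.indicator_of_notMem hs]
  calc volume K ≤ ∫⁻ y : EuclideanSpace ℝ (Fin m), ∫⁻ s : ℝ, F (y, s) := step1
    _ = ∫⁻ s : ℝ, ∫⁻ y : EuclideanSpace ℝ (Fin m), F (y, s) := step2
    _ ≤ ∫⁻ s : ℝ, (Set.Ioc a b).indicator (fun _ => ENNReal.ofReal C) s :=
        lintegral_mono step3
    _ = ENNReal.ofReal C * volume (Set.Ioc a b) := by
        rw [lintegral_indicator measurableSet_Ioc, setLIntegral_const]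
    _ = ENNReal.ofReal (b - a) * ENNReal.ofReal C := by
        rw [Real.volume_Ioc, mul_comm]


lemma ennrealHelper (n V X δ' : ℝ≥0∞) (hn0 : n ≠ 0) (hnt : n ≠ ⊤)
    (hV0 : V ≠ 0) (hVt : V ≠ ⊤) (hX : X ≤ δ' * V) : (n * V)⁻¹ * (n * X) ≤ δ' := by
  calc (n*V)⁻¹ * (n*X) ≤ (n*V)⁻¹ * (n * (δ' * V)) := by gcongr
    _ = δ' * ((n*V)⁻¹ * (n*V)) := by ring
    _ = δ' := by
        rw [ENNReal.inv_mul_cancel (by simp [hn0, hV0]) (ENNReal.mul_ne_top hnt hVt), mul_one]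



theorem stmt16 {d : ℕ} (hd : 2 < d)
    (b : EuclideanSpace ℝ (Fin d)) (σ : ℝ) (hσ : 0 < σ)
    (v₁ : EuclideanSpace ℝ (Fin d)) (hv₁ : ‖v₁‖ = 1)
    (δ : ℝ) (hδ0 : 0 < δ) (hδ1 : δ < 1) :
    uniformSphere d
      {q : Metric.sphere (0 : EuclideanSpace ℝ (Fin d)) 1 |
        |⟪v₁, b + σ • (q : EuclideanSpace ℝ (Fin d))⟫| ≤
          Real.sqrt Real.pi * σ * δ / Real.sqrt (2 * d)} ≤
    ENNReal.ofReal δ := by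
  obtain ⟨m, rfl⟩ : ∃ m, d = m + 1 := ⟨d - 1, by omega⟩
  have hm : 2 ≤ m := by omega
  haveI : Nontrivial (EuclideanSpace ℝ (Fin (m+1))) := by
    apply Module.nontrivial_of_finrank_pos (R := ℝ)
    rw [finrank_euclideanSpace_fin]; omega
  set ε : ℝ := Real.sqrt Real.pi * σ * δ / Real.sqrt (2 * (m+1 : ℕ)) with hε
  have hε0 : 0 < ε := by
    rw [hε]
    have h2d : (0:ℝ) < Real.sqrt (2 * (m+1 : ℕ)) := Real.sqrt_pos.2 (by positivity)
    have hπ : (0:ℝ) < Real.sqrt Real.pi := Real.sqrt_pos.2 Real.pi_pos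
    positivity
  set c : ℝ := ⟪v₁, b⟫ with hc
  set aσ : ℝ := (-c - ε)/σ with haσ
  set bσ : ℝ := (-c + ε)/σ with hbσ
  set aa : ℝ := max aσ (-1) with haa
  set bb : ℝ := min bσ 1 with hbb
  have haa1 : -1 ≤ aa := le_max_right _ _
  have hbb1 : bb ≤ 1 := min_le_right _ _
  set A : Set (Metric.sphere (0 : EuclideanSpace ℝ (Fin (m+1))) 1) :=
    {q : Metric.sphere (0 : EuclideanSpace ℝ (Fin (m+1))) 1 | |⟪v₁, b + σ • (q : EuclideanSpace ℝ (Fin (m+1)))⟫| ≤ ε} with hA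
  have hAmeas : MeasurableSet A := by
    have hcont : Continuous (fun q : Metric.sphere (0 : EuclideanSpace ℝ (Fin (m+1))) 1 =>
        |⟪v₁, b + σ • (q : EuclideanSpace ℝ (Fin (m+1)))⟫|) := by
      apply Continuous.abs
      exact Continuous.inner continuous_const
        (continuous_const.add (continuous_subtype_val.const_smul σ))
    exact (isClosed_le hcont continuous_const).measurableSet
  -- the cone set
  set Cset : Set (EuclideanSpace ℝ (Fin (m+1))) := {x | ‖x‖ ≤ 1 ∧ aa * ‖x‖ ≤ ⟪v₁, x⟫ ∧ ⟪v₁, x⟫ ≤ bb * ‖x‖} with hCset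
  have hsub : (Set.Ioo (0:ℝ) 1 • (Subtype.val '' A) : Set (EuclideanSpace ℝ (Fin (m+1)))) ⊆ Cset := by
    rintro x ⟨r, hr, y, hy, rfl⟩
    obtain ⟨q, hqA, rfl⟩ := hy
    have hq1 : ‖(q : EuclideanSpace ℝ (Fin (m+1)))‖ = 1 := by
      have := q.2
      rwa [mem_sphere_iff_norm, sub_zero] at this
    set ip : ℝ := ⟪v₁, (q : EuclideanSpace ℝ (Fin (m+1)))⟫ with hip
    have hip1 : |ip| ≤ 1 := by
      calc |ip| ≤ ‖v₁‖ * ‖(q : EuclideanSpace ℝ (Fin (m+1)))‖ := abs_real_inner_le_norm _ _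
        _ = 1 := by rw [hv₁, hq1, one_mul]
    have hev : |c + σ * ip| ≤ ε := by
      have := hqA
      simp only [hA, Set.mem_setOf_eq] at this
      rwa [inner_add_right, real_inner_smul_right] at this
    have hbnd := abs_le.1 hev
    have hipa : aσ ≤ ip := by
      rw [haσ, div_le_iff₀ hσ]
      nlinarith [hbnd.1]
    have hipb : ip ≤ bσ := by
      rw [hbσ, le_div_iff₀ hσ]
      nlinarith [hbnd.2]
    have hipaa : aa ≤ ip := max_le hipa (neg_le_of_abs_le hip1)
    have hipbb : ip ≤ bb := le_min hipb (le_of_abs_le hip1)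
    have hxn : ‖r • (q : EuclideanSpace ℝ (Fin (m+1)))‖ = r := by
      rw [norm_smul, hq1, mul_one, Real.norm_eq_abs, abs_of_pos hr.1]
    have hxi : ⟪v₁, r • (q : EuclideanSpace ℝ (Fin (m+1)))⟫ = r * ip := real_inner_smul_right _ _ _
    refine ⟨?_, ?_, ?_⟩
    · rw [hxn]; exact hr.2.le
    · rw [hxn, hxi]
      calc aa * r ≤ ip * r := mul_le_mul_of_nonneg_right hipaa hr.1.le
        _ = r * ip := mul_comm _ _
    · rw [hxn, hxi]
      calc r * ip = ip * r := mul_comm _ _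
        _ ≤ bb * r := mul_le_mul_of_nonneg_right hipbb hr.1.le
  -- transfer to the product space
  set K : Set (EuclideanSpace ℝ (Fin m) × ℝ) := {p |
      Real.sqrt (p.2^2 + ‖p.1‖^2) ≤ 1
      ∧ aa * Real.sqrt (p.2^2 + ‖p.1‖^2) ≤ p.2
      ∧ p.2 ≤ bb * Real.sqrt (p.2^2 + ‖p.1‖^2)} with hK
  have hcontR : Continuous (fun p : EuclideanSpace ℝ (Fin m) × ℝ =>
      Real.sqrt (p.2^2 + ‖p.1‖^2)) :=
    Real.continuous_sqrt.comp
      ((continuous_snd.pow 2).add ((continuous_norm.comp continuous_fst).pow 2))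
  have hKmeas : MeasurableSet K := by
    rw [hK]
    refine MeasurableSet.inter ?_ (MeasurableSet.inter ?_ ?_)
    · exact (isClosed_le hcontR continuous_const).measurableSet
    · exact (isClosed_le (continuous_const.mul hcontR) continuous_snd).measurableSet
    · exact (isClosed_le continuous_snd (continuous_const.mul hcontR)).measurableSet
  -- orthonormal basis with B 0 = v₁
  have hcard : Module.finrank ℝ (EuclideanSpace ℝ (Fin (m+1))) = Fintype.card (Fin (m+1)) := by
    rw [finrank_euclideanSpace_fin, Fintype.card_fin]
  have horth : Orthonormal ℝ (Set.restrict {(0 : Fin (m+1))} (fun _ => v₁)) := by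
    constructor
    · intro i
      exact hv₁
    · rintro ⟨i, hi⟩ ⟨j, hj⟩ hij
      simp only [Set.mem_singleton_iff] at hi hj
      exact absurd (by subst hi; subst hj; rfl) hij
  obtain ⟨B, hB⟩ := horth.exists_orthonormalBasis_extension_of_card_eq hcard
  have hB0 : B 0 = v₁ := hB 0 rfl
  -- the measure preserving map
  set eqm := (MeasurableEquiv.toLp 2 (Fin m → ℝ)).symm with heqm
  set e1 := (MeasurableEquiv.toLp 2 (Fin (m+1) → ℝ)).symm with he1
  set e2 := MeasurableEquiv.piFinSuccAbove (fun _ : Fin (m+1) => ℝ) 0 with he2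
  have h1 : MeasurePreserving e1 volume volume :=
    EuclideanSpace.volume_preserving_symm_measurableEquiv_toLp _
  have h2 : MeasurePreserving e2 volume volume :=
    MeasureTheory.volume_preserving_piFinSuccAbove _ 0
  have h3 : MeasurePreserving (Prod.map (id : ℝ → ℝ) eqm.symm) volume volume := by
    have := (MeasurePreserving.id (volume : Measure ℝ)).prod
      (EuclideanSpace.volume_preserving_symm_measurableEquiv_toLp (Fin m)).symm
    rwa [← Measure.volume_eq_prod, ← Measure.volume_eq_prod] at this
  have h4 : MeasurePreserving (Prod.swap : ℝ × EuclideanSpace ℝ (Fin m) →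
      EuclideanSpace ℝ (Fin m) × ℝ) volume volume := by
    have := Measure.measurePreserving_swap (μ := (volume : Measure ℝ))
      (ν := (volume : Measure (EuclideanSpace ℝ (Fin m))))
    rwa [← Measure.volume_eq_prod, ← Measure.volume_eq_prod] at this
  set χ : EuclideanSpace ℝ (Fin (m+1)) → EuclideanSpace ℝ (Fin m) × ℝ :=
    Prod.swap ∘ Prod.map (id : ℝ → ℝ) eqm.symm ∘ e2 ∘ e1 ∘ B.repr with hχ
  have hχMP : MeasurePreserving χ volume volume :=
    (((h4.comp h3).comp h2).comp h1).comp B.measurePreserving_repr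
  have hpre : Cset = χ ⁻¹' K := by
    ext x
    set z : EuclideanSpace ℝ (Fin (m+1)) := B.repr x with hz
    have hχx : χ x = (eqm.symm (fun j => z (Fin.succAbove 0 j)), z 0) := by
      simp only [hχ, Function.comp_apply, he2, MeasurableEquiv.piFinSuccAbove_apply,
        Prod.map, Prod.swap, id]
      rfl
    have hz0 : z 0 = ⟪v₁, x⟫ := by
      rw [hz, B.repr_apply_apply, hB0, real_inner_comm]
    have hnorm2 : Real.sqrt ((χ x).2^2 + ‖(χ x).1‖^2) = ‖x‖ := by
      rw [hχx]
      have hy : ‖eqm.symm (fun j => z (Fin.succAbove 0 j))‖^2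
          = ∑ j : Fin m, (z (Fin.succAbove 0 j))^2 := by
        rw [EuclideanSpace.norm_eq]
        rw [Real.sq_sqrt (by positivity)]
        congr 1
        ext j
        rw [Real.norm_eq_abs, sq_abs]
        rfl
      rw [hy]
      have hzx : ‖x‖ = ‖z‖ := (B.repr.norm_map x).symm
      rw [hzx, EuclideanSpace.norm_eq]
      congr 1
      rw [Fin.sum_univ_succ]
      simp only [Real.norm_eq_abs, sq_abs]
      congr 1
    simp only [hCset, hK, Set.mem_setOf_eq, Set.mem_preimage]
    rw [← hz0, ← hnorm2, hχx]
  -- volume bound via coneBound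
  have hvolC : volume Cset ≤ ENNReal.ofReal (bb - aa) *
      ENNReal.ofReal ((m : ℝ) * (Real.sqrt Real.pi ^ m / Real.Gamma (m/2+1)) / (m+1)) := by
    rw [hpre, hχMP.measure_preimage hKmeas.nullMeasurableSet]
    exact coneBound m hm aa bb haa1 hbb1
  -- final assembly
  have hV0 : (volume : Measure (EuclideanSpace ℝ (Fin (m+1)))) (Metric.ball 0 1) ≠ 0 :=
    (Metric.measure_ball_pos _ _ one_pos).ne'
  have hVt : (volume : Measure (EuclideanSpace ℝ (Fin (m+1)))) (Metric.ball 0 1) ≠ ⊤ :=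
    measure_ball_lt_top.ne
  have hVeq : (volume : Measure (EuclideanSpace ℝ (Fin (m+1)))) (Metric.ball 0 1)
      = ENNReal.ofReal (Real.sqrt Real.pi ^ (m+1) / Real.Gamma ((m+1 : ℝ)/2+1)) := by
    rw [EuclideanSpace.volume_ball]
    simp only [Fintype.card_fin, ENNReal.ofReal_one, one_pow, one_mul]
    congr 2
    push_cast
    ring
  have hIneq : ENNReal.ofReal (bb - aa) *
      ENNReal.ofReal ((m : ℝ) * (Real.sqrt Real.pi ^ m / Real.Gamma (m/2+1)) / (m+1))
      ≤ ENNReal.ofReal δ * volume (Metric.ball (0 : EuclideanSpace ℝ (Fin (m+1))) 1) := by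
    have hba : bb - aa ≤ 2 * ε / σ := by
      have h1 : aσ ≤ aa := le_max_left _ _
      have h2 : bb ≤ bσ := min_le_left _ _
      have h3 : bσ - aσ = 2 * ε / σ := by
        rw [hbσ, haσ]
        field_simp
        ring
      linarith
    have hC0 : (0:ℝ) ≤ (m : ℝ) * (Real.sqrt Real.pi ^ m / Real.Gamma (m/2+1)) / (m+1) := by
      have := Real.Gamma_pos_of_pos (show (0:ℝ) < (m:ℝ)/2+1 by positivity)
      positivity
    have h2εσ : (0:ℝ) ≤ 2 * ε / σ := by positivity
    have hreal : (2 * ε / σ) * ((m : ℝ) * (Real.sqrt Real.pi ^ m / Real.Gamma (m/2+1)) / (m+1))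
        ≤ δ * (Real.sqrt Real.pi ^ (m+1) / Real.Gamma ((m+1 : ℝ)/2+1)) := by
      have h2ε : 2 * ε / σ = 2 * Real.sqrt Real.pi * δ / Real.sqrt (2 * ((m:ℝ)+1)) := by
        rw [hε]
        push_cast
        field_simp
      rw [h2ε]
      have := finalArith m hm δ hδ0
      calc 2 * Real.sqrt Real.pi * δ / Real.sqrt (2 * ((m:ℝ)+1)) *
            ((m : ℝ) * (Real.sqrt Real.pi ^ m / Real.Gamma (m/2+1)) / (m+1))
          = (2 * Real.sqrt Real.pi * δ / Real.sqrt (2 * ((m:ℝ)+1))) * ((m : ℝ)/(m+1))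
            * (Real.sqrt Real.pi ^ m / Real.Gamma (m/2+1)) := by ring
        _ ≤ δ * (Real.sqrt Real.pi ^ (m+1) / Real.Gamma (((m:ℝ)+1)/2+1)) := this
        _ = δ * (Real.sqrt Real.pi ^ (m+1) / Real.Gamma ((m+1 : ℝ)/2+1)) := by norm_num
    calc ENNReal.ofReal (bb - aa) *
        ENNReal.ofReal ((m : ℝ) * (Real.sqrt Real.pi ^ m / Real.Gamma (m/2+1)) / (m+1))
        ≤ ENNReal.ofReal (2 * ε / σ) *
          ENNReal.ofReal ((m : ℝ) * (Real.sqrt Real.pi ^ m / Real.Gamma (m/2+1)) / (m+1)) := by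
          exact mul_le_mul_left (ENNReal.ofReal_le_ofReal hba) _
      _ = ENNReal.ofReal ((2 * ε / σ) *
          ((m : ℝ) * (Real.sqrt Real.pi ^ m / Real.Gamma (m/2+1)) / (m+1))) := by
          rw [← ENNReal.ofReal_mul h2εσ]
      _ ≤ ENNReal.ofReal (δ * (Real.sqrt Real.pi ^ (m+1) / Real.Gamma ((m+1 : ℝ)/2+1))) :=
          ENNReal.ofReal_le_ofReal hreal
      _ = ENNReal.ofReal δ * volume (Metric.ball (0 : EuclideanSpace ℝ (Fin (m+1))) 1) := by
          rw [hVeq, ← ENNReal.ofReal_mul hδ0.le]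
  have hX : volume (Set.Ioo (0:ℝ) 1 • (Subtype.val '' A) : Set (EuclideanSpace ℝ (Fin (m+1))))
      ≤ ENNReal.ofReal δ * volume (Metric.ball (0 : EuclideanSpace ℝ (Fin (m+1))) 1) :=
    le_trans (le_trans (measure_mono hsub) hvolC) hIneq
  rw [uniformSphere, Measure.smul_apply, smul_eq_mul,
    Measure.toSphere_apply' _ hAmeas, Measure.toSphere_apply_univ]
  exact ennrealHelper _ _ _ _
    (by
      rw [finrank_euclideanSpace_fin]
      exact Nat.cast_ne_zero.2 (by omega))
    (ENNReal.natCast_ne_top _) hV0 hVt hX
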